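/- For a sequence X : ℕ → Bool, the following are equivalent: (1) there exists a deterministic Büchi automaton M over Bool (on some finite state type) with μ(L(M)) = 0 and X ∈ L(M); (2) X is not disjunctive. -/

import Mathlib

open MeasureTheory Filter

/-- The fair-coin product probability measure on Cantor space `ℕ → Bool`,
constructed as the pushforward of Lebesgue measure on `[0,1)` under binary expansion. -/
noncomputable def mu : Measure (ℕ → Bool) :=
  Measure.map (fun x n => decide (⌊x * 2 ^ (n + 1)⌋ % 2 = 1))
    (volume.restrict (Set.Ico (0 : ℝ) 1))

/-- Action of a word on a state of an automaton. -/
def act {S A : Type*} (f : S → A → S) (s : S) (w : List A) : S := w.foldl f s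

/-- The run of a sequence `X` on the machine `(S, f, s₀)`. -/
def run {S : Type*} (f : S → Bool → S) (s₀ : S) (X : ℕ → Bool) : ℕ → S
  | 0 => s₀
  | n + 1 => f (run f s₀ X n) (X n)

/-- `t` is reachable from `s`. -/
def Reach {S : Type*} (f : S → Bool → S) (s t : S) : Prop := ∃ w : List Bool, act f s w = t

/-- The connected component of a state `s`. -/
def component {S : Type*} (f : S → Bool → S) (s : S) : Set S :=
  {t | Reach f s t ∧ Reach f t s}

/-- `g` is a leaf connected component. -/
def IsLeafComponent {S : Type*} (f : S → Bool → S) (g : Set S) : Prop :=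
  (∃ s, g = component f s) ∧ ∀ s ∈ g, ∀ t, Reach f s t → Reach f t s

/-- The word `w` occurs as a subword of the sequence `X`. -/
def Occurs (w : List Bool) (X : ℕ → Bool) : Prop :=
  ∃ n, ∀ k < w.length, X (n + k) = w.getD k false

/-- `X` is disjunctive: every word occurs in `X` as a subword. -/
def Disjunctive (X : ℕ → Bool) : Prop := ∀ w : List Bool, Occurs w X

/-- The word `w` is a prefix of the sequence `X`. -/
def IsPrefixOfSeq (w : List Bool) (X : ℕ → Bool) : Prop :=
  ∀ k < w.length, X k = w.getD k false

/-- `[L]`: the set of sequences having some prefix in the language `L`. -/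
def cyl (L : Set (List Bool)) : Set (ℕ → Bool) := {X | ∃ w ∈ L, IsPrefixOfSeq w X}

/-- `I(X)`: the set of states visited infinitely often by the run of `X`. -/
def InfOcc {S : Type*} (f : S → Bool → S) (s₀ : S) (X : ℕ → Bool) : Set S :=
  {s | ∃ᶠ n in atTop, run f s₀ X n = s}

/-- `X` is accepted by the deterministic Büchi automaton `(S, f, s₀, F)`. -/
def BuchiAccepts {S : Type*} (f : S → Bool → S) (s₀ : S) (F : Set S) (X : ℕ → Bool) : Prop :=
  ∃ᶠ n in atTop, run f s₀ X n ∈ F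

/-- A language is regular if it is accepted by a DFA with finitely many states. -/
def Regular {A : Type} (L : Set (List A)) : Prop :=
  ∃ (S : Type) (_ : Fintype S) (f : S → A → S) (s₀ : S) (F : Set S),
    L = {w | act f s₀ w ∈ F}

/-- The convolution of two words. -/
def conv (x i : List Bool) : List (Option Bool × Option Bool) :=
  (List.range (max x.length i.length)).map (fun k => (x[k]?, i[k]?))

/-- `(I, U)` is an automatic family. -/
def IsAutomaticFamily (I : Set (List Bool)) (U : List Bool → Set (List Bool)) : Prop :=
  Regular I ∧ Regular {c | ∃ i ∈ I, ∃ x ∈ U i, c = conv x i}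

/-- `(I, U)` is an automatic randomness test (ART). -/
def IsART (I : Set (List Bool)) (U : List Bool → Set (List Bool)) : Prop :=
  IsAutomaticFamily I U ∧ ∀ ε : ENNReal, 0 < ε → ∃ i ∈ I, mu (cyl (U i)) ≤ ε

/-- `(I, U)` is a Martin-Löf automatic randomness test (MART). -/
def IsMART (I : Set (List Bool)) (U : List Bool → Set (List Bool)) : Prop :=
  IsAutomaticFamily I U ∧ I.Infinite ∧
    ∀ i ∈ I, mu (cyl (U i)) ≤ (2 : ENNReal) ^ (-(i.length : ℤ))

/-- The covering region `F(I, U)` of a test. -/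
def coverRegion (I : Set (List Bool)) (U : List Bool → Set (List Bool)) : Set (ℕ → Bool) :=
  ⋂ i ∈ I, cyl (U i)

namespace S8

/-- digit function -/
noncomputable def g (x : ℝ) : ℕ → Bool := fun n => decide (⌊x * 2 ^ (n + 1)⌋ % 2 = 1)

lemma g_meas : Measurable g := by
  refine measurable_pi_lambda _ (fun n => ?_)
  have h1 : Measurable fun x : ℝ => ⌊x * 2 ^ (n+1)⌋ :=
    Int.measurable_floor.comp (measurable_id.mul_const _)
  exact (Measurable.of_discrete (f := fun z : ℤ => decide (z % 2 = 1))).comp h1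

lemma mu_apply {E : Set (ℕ → Bool)} (hE : MeasurableSet E) :
    mu E = volume (g ⁻¹' E ∩ Set.Ico (0:ℝ) 1) := by
  have : mu = Measure.map g (volume.restrict (Set.Ico (0 : ℝ) 1)) := rfl
  rw [this, Measure.map_apply g_meas hE, Measure.restrict_apply (g_meas hE)]

lemma mu_univ : mu Set.univ = 1 := by
  rw [mu_apply MeasurableSet.univ]
  simp [Real.volume_Ico]

def wval (w : List Bool) : ℤ := w.foldl (fun a b => 2 * a + (if b then 1 else 0)) 0

lemma wval_append (w : List Bool) (b : Bool) :
    wval (w ++ [b]) = 2 * wval w + (if b then 1 else 0) := by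
  simp [wval, List.foldl_append]

lemma wval_nonneg (w : List Bool) : 0 ≤ wval w := by
  induction w using List.reverseRecOn with
  | nil => simp [wval]
  | append_singleton w b ih => rw [wval_append]; split <;> omega

lemma wval_lt (w : List Bool) : wval w < 2 ^ w.length := by
  induction w using List.reverseRecOn with
  | nil => simp [wval]
  | append_singleton w b ih =>
      rw [wval_append]
      simp only [List.length_append, List.length_singleton]
      rw [pow_succ]
      split <;> omega

lemma digits_iff_floor (w : List Bool) (x : ℝ) (hx : x ∈ Set.Ico (0:ℝ) 1) :
    (∀ k < w.length, g x k = w.getD k false) ↔ ⌊x * 2 ^ w.length⌋ = wval w := by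
  induction w using List.reverseRecOn with
  | nil =>
      simp only [List.length_nil, Nat.not_lt_zero, false_implies, implies_true, true_iff]
      rw [pow_zero, mul_one, wval]
      simpa [Int.floor_eq_zero_iff] using hx
  | append_singleton w b ih =>
      set n := w.length with hn
      have hlen : (w ++ [b]).length = n + 1 := by simp [hn]
      rw [hlen, wval_append]
      set A := ⌊x * 2 ^ (n+1)⌋ with hA
      set m := ⌊x * 2 ^ n⌋ with hm
      have hdbl : x * 2 ^ (n+1) = (x * 2 ^ n) * 2 := by ring
      have hAn : A = 2 * m + A % 2 := by
        have hle : (2 * m : ℝ) ≤ x * 2 ^ (n+1) := by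
          have := Int.floor_le (x * 2 ^ n); push_cast; rw [hdbl]; nlinarith
        have hlt : x * 2 ^ (n+1) < 2 * m + 2 := by
          have := Int.lt_floor_add_one (x * 2 ^ n); push_cast; rw [hdbl]; nlinarith
        have h1' : 2 * m ≤ A := Int.le_floor.2 (by exact_mod_cast hle)
        have h2' : A < 2 * m + 2 := by
          have hAr : (A : ℝ) < 2 * m + 2 := lt_of_le_of_lt (Int.floor_le _) hlt
          exact_mod_cast hAr
        omega
      have hgetD : ∀ k < n, (w ++ [b]).getD k false = w.getD k false := by
        intro k hk
        simp [List.getD, List.getElem?_append_left hk]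
      have hgetDn : (w ++ [b]).getD n false = b := by
        simp [List.getD, hn]
      have hsplit : (∀ k < n + 1, g x k = (w ++ [b]).getD k false) ↔
          ((∀ k < n, g x k = w.getD k false) ∧ g x n = b) := by
        constructor
        · intro h
          refine ⟨fun k hk => by rw [← hgetD k hk]; exact h k (by omega), ?_⟩
          rw [← hgetDn]; exact h n (by omega)
        · rintro ⟨h1, h2⟩ k hk
          rcases Nat.lt_or_ge k n with h | h
          · rw [hgetD k h]; exact h1 k h
          · have : k = n := by omega
            subst this; rw [hgetDn]; exact h2
      have hgxn : g x n = b ↔ A % 2 = (if b then 1 else 0) := by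
        have he : A % 2 = 0 ∨ A % 2 = 1 := Int.emod_two_eq_zero_or_one A
        cases b <;> simp [g, ← hA] <;> omega
      rw [hsplit, ih, hgxn]
      constructor
      · rintro ⟨h1, h2⟩; omega
      · intro h
        have hb : (0:ℤ) ≤ (if b then 1 else 0) ∧ (if b then 1 else 0) ≤ (1:ℤ) := by
          split <;> omega
        constructor <;> omega

lemma cyl_preimage (w : List Bool) :
    g ⁻¹' {Y | IsPrefixOfSeq w Y} ∩ Set.Ico (0:ℝ) 1 =
      Set.Ico ((wval w : ℝ) / 2 ^ w.length) (((wval w : ℝ) + 1) / 2 ^ w.length) := by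
  set n := w.length with hn
  set m := wval w with hm
  have hc : (0:ℝ) < 2 ^ n := by positivity
  have hm0 : (0:ℝ) ≤ (m:ℝ) := by exact_mod_cast wval_nonneg w
  have hm1 : ((m:ℝ) + 1) ≤ 2 ^ n := by
    have hZ : m + 1 ≤ 2 ^ n := by have h := wval_lt w; rw [← hn] at h; omega
    exact_mod_cast hZ
  ext x
  simp only [Set.mem_inter_iff, Set.mem_preimage, Set.mem_setOf_eq, Set.mem_Ico]
  constructor
  · rintro ⟨hpre, hx⟩
    have hfl : ⌊x * 2 ^ n⌋ = m := (digits_iff_floor w x hx).1 hpre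
    have h1 : (m:ℝ) ≤ x * 2 ^ n := by rw [← hfl]; exact Int.floor_le _
    have h2 : x * 2 ^ n < (m:ℝ) + 1 := by
      have h := Int.lt_floor_add_one (x * 2 ^ n)
      rw [hfl] at h; exact_mod_cast h
    constructor
    · rw [div_le_iff₀ hc]; linarith
    · rw [lt_div_iff₀ hc]; linarith
  · rintro ⟨h1, h2⟩
    rw [div_le_iff₀ hc] at h1
    rw [lt_div_iff₀ hc] at h2
    have hx : x ∈ Set.Ico (0:ℝ) 1 := by
      constructor
      · nlinarith
      · nlinarith
    have hfl : ⌊x * 2 ^ n⌋ = m := by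
      rw [Int.floor_eq_iff]
      · exact ⟨h1, by exact_mod_cast h2⟩
    refine ⟨(digits_iff_floor w x hx).2 hfl, hx⟩

lemma g_shift (w : List Bool) (x : ℝ) :
    g (x * 2 ^ w.length - (wval w : ℝ)) = fun k => g x (k + w.length) := by
  funext k
  set n := w.length with hn
  have h1 : (x * 2 ^ n - (wval w : ℝ)) * 2 ^ (k+1)
      = x * 2 ^ (k + n + 1) - ((wval w * 2 ^ (k+1) : ℤ) : ℝ) := by
    push_cast; ring
  simp only [g, h1, Int.floor_sub_intCast]
  rw [show k + n + 1 = (k + n) + 1 from rfl]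
  rw [decide_eq_decide]
  have h2 : wval w * 2 ^ (k+1) = (wval w * 2 ^ k) * 2 := by ring
  rw [h2]
  omega

lemma measurableSet_coord (k : ℕ) (b : Bool) : MeasurableSet {Y : ℕ → Bool | Y k = b} := by
  have : {Y : ℕ → Bool | Y k = b} = (fun Y : ℕ → Bool => Y k) ⁻¹' {b} := rfl
  rw [this]
  exact measurable_pi_apply k (measurableSet_singleton b)

lemma measurableSet_prefix (w : List Bool) : MeasurableSet {Y | IsPrefixOfSeq w Y} := by
  have : {Y | IsPrefixOfSeq w Y} = ⋂ k ∈ Set.Iio w.length, {Y : ℕ → Bool | Y k = w.getD k false} := by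
    ext Y; simp [IsPrefixOfSeq]
  rw [this]
  exact MeasurableSet.biInter (Set.to_countable _) fun k _ => measurableSet_coord _ _

lemma shift_meas (n : ℕ) : Measurable (fun Y : ℕ → Bool => fun k => Y (k + n)) :=
  measurable_pi_lambda _ fun k => measurable_pi_apply _

lemma mu_prefix_shift (w : List Bool) (E : Set (ℕ → Bool)) (hE : MeasurableSet E) :
    mu {Y | IsPrefixOfSeq w Y ∧ (fun k => Y (k + w.length)) ∈ E}
      = 2⁻¹ ^ w.length * mu E := by
  set n := w.length with hn
  set m := wval w with hm
  have hc : (0:ℝ) < 2 ^ n := by positivity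
  have hmeasS : MeasurableSet {Y | IsPrefixOfSeq w Y ∧ (fun k => Y (k + n)) ∈ E} := by
    have : {Y | IsPrefixOfSeq w Y ∧ (fun k => Y (k + n)) ∈ E}
        = {Y | IsPrefixOfSeq w Y} ∩ ((fun Y : ℕ → Bool => fun k => Y (k + n)) ⁻¹' E) := rfl
    rw [this]
    exact (measurableSet_prefix w).inter (shift_meas n hE)
  rw [mu_apply hmeasS, mu_apply hE]
  set B := g ⁻¹' E ∩ Set.Ico (0:ℝ) 1 with hB
  have hset : g ⁻¹' {Y | IsPrefixOfSeq w Y ∧ (fun k => Y (k + n)) ∈ E} ∩ Set.Ico (0:ℝ) 1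
      = (fun x : ℝ => x * 2 ^ n - (m:ℝ)) ⁻¹' B := by
    have hIco := cyl_preimage w
    ext x
    simp only [Set.mem_inter_iff, Set.mem_preimage, Set.mem_setOf_eq, hB]
    have hTmem : (x * 2 ^ n - (m:ℝ) ∈ Set.Ico (0:ℝ) 1)
        ↔ x ∈ Set.Ico ((m:ℝ) / 2 ^ n) (((m:ℝ) + 1) / 2 ^ n) := by
      simp only [Set.mem_Ico, sub_nonneg, sub_lt_iff_lt_add, div_le_iff₀ hc, lt_div_iff₀ hc]
      constructor <;> rintro ⟨h1, h2⟩ <;> exact ⟨h1, by linarith⟩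
    have hgT : g (x * 2 ^ n - (m:ℝ)) = fun k => g x (k + n) := g_shift w x
    constructor
    · rintro ⟨⟨hpre, hsh⟩, hx⟩
      refine ⟨by rw [hgT]; exact hsh, ?_⟩
      rw [hTmem]
      have : x ∈ g ⁻¹' {Y | IsPrefixOfSeq w Y} ∩ Set.Ico (0:ℝ) 1 := ⟨hpre, hx⟩
      rw [hIco] at this; exact this
    · rintro ⟨hgE, hT⟩
      rw [hTmem] at hT
      have : x ∈ g ⁻¹' {Y | IsPrefixOfSeq w Y} ∩ Set.Ico (0:ℝ) 1 := by rw [hIco]; exact hT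
      exact ⟨⟨this.1, by rw [← hgT]; exact hgE⟩, this.2⟩
  rw [hset]
  have hcomp : (fun x : ℝ => x * 2 ^ n - (m:ℝ)) ⁻¹' B
      = (· * (2:ℝ) ^ n) ⁻¹' ((fun y : ℝ => y + (-(m:ℝ))) ⁻¹' B) := by
    ext x; simp [sub_eq_add_neg]
  rw [hcomp, Real.volume_preimage_mul_right (by positivity : ((2:ℝ) ^ n) ≠ 0),
    measure_preimage_add_right]
  congr 1
  rw [abs_of_pos (by positivity)]
  rw [← inv_pow, ENNReal.ofReal_pow (by norm_num : (0:ℝ) ≤ 2⁻¹)]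
  congr 1
  rw [ENNReal.ofReal_inv_of_pos (by norm_num : (0:ℝ) < 2)]
  norm_num

lemma mu_prefix (w : List Bool) : mu {Y | IsPrefixOfSeq w Y} = 2⁻¹ ^ w.length := by
  have h := mu_prefix_shift w Set.univ MeasurableSet.univ
  simpa [mu_univ] using h

section Automaton

variable {S : Type*} (f : S → Bool → S)

def pre (Z : ℕ → Bool) (t : ℕ) : List Bool := List.ofFn fun k : Fin t => Z k

@[simp] lemma pre_length (Z : ℕ → Bool) (t : ℕ) : (pre Z t).length = t := by simp [pre]

lemma pre_getD (Z : ℕ → Bool) (t k : ℕ) (hk : k < t) : (pre Z t).getD k false = Z k := by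
  rw [pre, List.getD_eq_getElem _ _ (by simpa using hk)]
  simp

lemma act_append (s : S) (u v : List Bool) : act f s (u ++ v) = act f (act f s u) v :=
  List.foldl_append

lemma run_eq_act (s : S) (Z : ℕ → Bool) (t : ℕ) : run f s Z t = act f s (pre Z t) := by
  induction t with
  | zero => rfl
  | succ t ih =>
      have hp : pre Z (t+1) = (pre Z t).concat (Z t) := by
        rw [pre, List.ofFn_succ']
        congr 1
      rw [hp, List.concat_eq_append, act_append]
      show f (run f s Z t) (Z t) = act f (act f s (pre Z t)) [Z t]
      rw [ih]; rfl

lemma run_congr (s : S) {Y Z : ℕ → Bool} (t : ℕ) (h : ∀ i < t, Y i = Z i) :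
    run f s Y t = run f s Z t := by
  induction t with
  | zero => rfl
  | succ t ih =>
      show f (run f s Y t) (Y t) = f (run f s Z t) (Z t)
      rw [ih (fun i hi => h i (by omega)), h t (by omega)]

lemma run_add (s : S) (Z : ℕ → Bool) (a t : ℕ) :
    run f s Z (a + t) = run f (run f s Z a) (fun n => Z (n + a)) t := by
  induction t with
  | zero => rfl
  | succ t ih =>
      show run f s Z (a + t + 1) = _
      show f (run f s Z (a + t)) (Z (a + t)) = f (run f (run f s Z a) (fun n => Z (n + a)) t) _
      rw [ih, add_comm a t]

lemma act_mem_of_closed {D : Set S} (hcl : ∀ s ∈ D, ∀ b, f s b ∈ D) {s : S} (hs : s ∈ D)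
    (l : List Bool) : act f s l ∈ D := by
  induction l generalizing s with
  | nil => exact hs
  | cons b l ih => exact ih (hcl s hs b)

lemma measurableSet_run_eq [Countable S] (s₀ : S) (t : ℕ) (s : S) :
    MeasurableSet {Y : ℕ → Bool | run f s₀ Y t = s} := by
  induction t generalizing s with
  | zero =>
      by_cases h : s₀ = s
      · have : {Y : ℕ → Bool | run f s₀ Y 0 = s} = Set.univ := by
          ext Y; simp [run, h]
        rw [this]; exact MeasurableSet.univ
      · have : {Y : ℕ → Bool | run f s₀ Y 0 = s} = ∅ := by
          ext Y; simp [run, h]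
        rw [this]; exact MeasurableSet.empty
  | succ t ih =>
      have hset : {Y : ℕ → Bool | run f s₀ Y (t+1) = s}
          = ⋃ (r : S), ⋃ (b : Bool),
              (({Y : ℕ → Bool | run f s₀ Y t = r} ∩ {Y : ℕ → Bool | Y t = b})
                ∩ {_Y : ℕ → Bool | f r b = s}) := by
        ext Y
        simp only [Set.mem_setOf_eq, Set.mem_iUnion, Set.mem_inter_iff]
        constructor
        · intro h
          exact ⟨run f s₀ Y t, Y t, ⟨⟨rfl, rfl⟩, h⟩⟩
        · rintro ⟨r, b, ⟨⟨h1, h2⟩, h3⟩⟩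
          show f (run f s₀ Y t) (Y t) = s
          rw [h1, h2]; exact h3
      rw [hset]
      refine MeasurableSet.iUnion fun r => MeasurableSet.iUnion fun b => ?_
      exact ((ih r).inter (measurableSet_coord t b)).inter (MeasurableSet.const _)

lemma measurableSet_avoid [Countable S] (s : S) (q : S) (K : ℕ) :
    MeasurableSet {Z : ℕ → Bool | ∀ t, 1 ≤ t → t ≤ K → run f s Z t ≠ q} := by
  have hset : {Z : ℕ → Bool | ∀ t, 1 ≤ t → t ≤ K → run f s Z t ≠ q}
      = ⋂ (t : ℕ), {Z : ℕ → Bool | 1 ≤ t → t ≤ K → run f s Z t ≠ q} := by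
    ext Z; simp
  rw [hset]
  refine MeasurableSet.iInter fun t => ?_
  by_cases h1 : 1 ≤ t ∧ t ≤ K
  · have : {Z : ℕ → Bool | 1 ≤ t → t ≤ K → run f s Z t ≠ q}
        = {Z : ℕ → Bool | run f s Z t = q}ᶜ := by
      ext Z; simp [h1.1, h1.2]
    rw [this]; exact (measurableSet_run_eq f s t q).compl
  · have : {Z : ℕ → Bool | 1 ≤ t → t ≤ K → run f s Z t ≠ q} = Set.univ := by
      ext Z; simp only [Set.mem_setOf_eq, Set.mem_univ, iff_true]
      intro ht1 ht2; exact absurd ⟨ht1, ht2⟩ h1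
    rw [this]; exact MeasurableSet.univ

end Automaton

section AvoidBound

variable {S : Type} [Fintype S] (f : S → Bool → S) (q : S)

/-- extend a finite vector by `false`s -/
def ext' {L : ℕ} (v : Fin L → Bool) : ℕ → Bool := fun i => if h : i < L then v ⟨i, h⟩ else false

theorem mu_avoid_pow {D : Set S} (hcl : ∀ s ∈ D, ∀ b, f s b ∈ D) (L : ℕ)
    (hesc : ∀ s ∈ D, ∃ p : List Bool, 1 ≤ p.length ∧ p.length ≤ L ∧ act f s p = q) :
    ∀ k, ∀ s ∈ D, mu {Z | ∀ t, 1 ≤ t → t ≤ k * L → run f s Z t ≠ q}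
      ≤ (1 - 2⁻¹ ^ L) ^ k := by
  classical
  intro k
  induction k with
  | zero =>
      intro s _
      rw [pow_zero]
      calc mu _ ≤ mu Set.univ := measure_mono (Set.subset_univ _)
        _ = 1 := mu_univ
  | succ k ih =>
      intro s hs
      set c : ENNReal := 1 - 2⁻¹ ^ L with hc
      obtain ⟨p, hp1, hpL, hpq⟩ := hesc s hs
      set e : Fin L → Bool := fun i => p.getD i false with he
      have hepre : pre (ext' e) p.length = p := by
        apply List.ext_getElem (by simp)
        intro i h1 h2
        rw [← List.getD_eq_getElem _ false, ← List.getD_eq_getElem _ false]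
        rw [pre_getD _ _ _ (by simpa using h1)]
        have hiL : i < L := by omega
        simp [ext', hiL, he]
      have hrune : run f s (ext' e) p.length = q := by
        rw [run_eq_act, hepre, hpq]
      set Bad : Finset (Fin L → Bool) := Finset.univ.erase e with hBad
      have hcard : (Bad.card : ENNReal) ≤ ((2 ^ L - 1 : ℕ) : ENNReal) := by
        have h2 : Bad.card = 2 ^ L - 1 := by
          rw [hBad, Finset.card_erase_of_mem (Finset.mem_univ e), Finset.card_univ]
          congr 1
          simp [Fintype.card_fun]
        exact_mod_cast h2.le
      -- inclusion
      have hincl : {Z | ∀ t, 1 ≤ t → t ≤ (k+1) * L → run f s Z t ≠ q}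
          ⊆ ⋃ v ∈ Bad, {Z | IsPrefixOfSeq (List.ofFn v) Z ∧
              (fun j => Z (j + (List.ofFn v).length)) ∈
                {W | ∀ t, 1 ≤ t → t ≤ k * L → run f (act f s (List.ofFn v)) W t ≠ q}} := by
        intro Z hZ
        simp only [Set.mem_setOf_eq] at hZ
        set v : Fin L → Bool := fun i => Z i with hv
        have hagree : ∀ i < L, ext' v i = Z i := by
          intro i hi; simp [ext', hi, hv]
        have hvBad : v ∈ Bad := by
          rw [hBad, Finset.mem_erase]
          refine ⟨?_, Finset.mem_univ v⟩
          intro hve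
          have hr : run f s Z p.length = q := by
            rw [← hrune, ← hve]
            exact run_congr f s p.length fun i hi => (hagree i (by omega)).symm
          exact hZ p.length hp1 (le_trans hpL (by nlinarith)) hr
        refine Set.mem_biUnion hvBad ?_
        have hofv : act f s (List.ofFn v) = run f s Z L := by
          rw [run_eq_act]; rfl
        constructor
        · intro i hi
          simp only [List.length_ofFn] at hi
          rw [List.getD_eq_getElem _ _ (by simpa using hi)]
          simp [hv]
        · intro t ht1 htk
          simp only [List.length_ofFn, Set.mem_setOf_eq]
          rw [hofv, ← run_add]
          refine hZ (L + t) (by omega) (by nlinarith)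
      calc mu {Z | ∀ t, 1 ≤ t → t ≤ (k+1) * L → run f s Z t ≠ q}
          ≤ ∑ v ∈ Bad, mu {Z | IsPrefixOfSeq (List.ofFn v) Z ∧
              (fun j => Z (j + (List.ofFn v).length)) ∈
                {W | ∀ t, 1 ≤ t → t ≤ k * L → run f (act f s (List.ofFn v)) W t ≠ q}} :=
            le_trans (measure_mono hincl) (measure_biUnion_finset_le _ _)
        _ ≤ ∑ v ∈ Bad, 2⁻¹ ^ L * c ^ k := by
            refine Finset.sum_le_sum fun v _ => ?_
            rw [mu_prefix_shift _ _ (measurableSet_avoid f _ q (k * L)), List.length_ofFn]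
            refine mul_le_mul_right ?_ _
            exact ih (act f s (List.ofFn v)) (act_mem_of_closed f hcl hs _)
        _ = (Bad.card : ENNReal) * (2⁻¹ ^ L * c ^ k) := by
            rw [Finset.sum_const, nsmul_eq_mul]
        _ ≤ ((2 ^ L - 1 : ℕ) : ENNReal) * (2⁻¹ ^ L * c ^ k) := by
            exact mul_le_mul_left hcard _
        _ = c ^ (k + 1) := by
            have h2L : ((2 ^ L - 1 : ℕ) : ENNReal) = 2 ^ L - 1 := by
              push_cast [Nat.one_le_two_pow]
              rfl
            rw [h2L, pow_succ]
            have hmul : ((2:ENNReal) ^ L - 1) * 2⁻¹ ^ L = c := by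
              rw [ENNReal.sub_mul (fun _ _ => by simp), ← mul_pow]
              rw [ENNReal.mul_inv_cancel (by norm_num) (by norm_num)]
              simp [hc]
            rw [← mul_assoc, hmul, mul_comm]

end AvoidBound

section BlockAutomaton

variable (w : List Bool) (hn : 0 < w.length)

abbrev BS (w : List Bool) := Option (Fin w.length × Bool)

instance : Fintype (BS w) := by unfold BS; infer_instance

def trans : BS w → Bool → BS w
  | none, _ => none
  | some (i, ok), b =>
      let ok' := ok && (b == w.getD i false)
      if _h : (i : ℕ) + 1 = w.length then (if ok' then none else some (⟨0, hn⟩, true))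
      else some (⟨(i:ℕ) + 1, by omega⟩, ok')

@[simp] lemma trans_none (b : Bool) : trans w hn none b = none := rfl

lemma act_trans_none (l : List Bool) : act (trans w hn) none l = none := by
  induction l with
  | nil => rfl
  | cons b l ih => exact ih

lemma run_none_absorb (Y : ℕ → Bool) (s₀ : BS w) (t : ℕ) (h : run (trans w hn) s₀ Y t = none) :
    ∀ d, run (trans w hn) s₀ Y (t + d) = none := by
  intro d
  induction d with
  | zero => exact h
  | succ d ih =>
      show trans w hn (run (trans w hn) s₀ Y (t + d)) (Y (t + d)) = none
      rw [ih]; rfl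

lemma act_block (m : ℕ) (hm : 0 < m) : ∀ (i : Fin w.length) (ok : Bool), (i:ℕ) + m = w.length →
    act (trans w hn) (some (i, ok)) (List.replicate m false) = none ∨
    act (trans w hn) (some (i, ok)) (List.replicate m false) = some (⟨0, hn⟩, true) := by
  induction m with
  | zero => omega
  | succ m ih =>
      intro i ok hend
      rw [List.replicate_succ]
      show _ ∨ _
      have hstep : act (trans w hn) (some (i, ok)) (false :: List.replicate m false)
          = act (trans w hn) (trans w hn (some (i, ok)) false) (List.replicate m false) := rfl
      rcases Nat.eq_zero_or_pos m with hm0 | hmpos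
      · subst hm0
        have hi1 : (i:ℕ) + 1 = w.length := by omega
        rw [hstep]
        show _ ∨ _
        have : trans w hn (some (i, ok)) false
            = if (ok && (false == w.getD i false)) then none else some (⟨0, hn⟩, true) := by
          simp [trans, hi1]
        rw [this]
        by_cases hok : (ok && (false == w.getD i false)) = true
        · rw [hok]; left; simp [act_trans_none]
        · rw [Bool.not_eq_true] at hok; rw [hok]; right; rfl
      · have hi1 : (i:ℕ) + 1 ≠ w.length := by omega
        rw [hstep]
        have : trans w hn (some (i, ok)) false
            = some (⟨(i:ℕ)+1, by omega⟩, ok && (false == w.getD i false)) := by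
          simp [trans, hi1]
        rw [this]
        exact ih hmpos ⟨(i:ℕ)+1, by omega⟩ _ (by simp; omega)

lemma act_spell : ∀ (m : ℕ) (i : ℕ) (h : i < w.length), i + m = w.length →
    act (trans w hn) (some (⟨i, h⟩, true)) (w.drop i) = none := by
  intro m
  induction m with
  | zero => omega
  | succ m ih =>
      intro i h hend
      rw [List.drop_eq_getElem_cons h]
      show act (trans w hn) (trans w hn (some (⟨i, h⟩, true)) w[i]) (w.drop (i+1)) = none
      have hok : (true && (w[i] == w.getD i false)) = true := by
        simp [List.getD, List.getElem?_eq_getElem h]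
      by_cases hi1 : i + 1 = w.length
      · have : trans w hn (some (⟨i, h⟩, true)) w[i] = none := by
          simp [trans, hi1, List.getD, List.getElem?_eq_getElem h]
        rw [this, act_trans_none]
      · have : trans w hn (some (⟨i, h⟩, true)) w[i] = some (⟨i+1, by omega⟩, true) := by
          simp [trans, hi1, List.getD, List.getElem?_eq_getElem h]
        rw [this]
        exact ih (i+1) (by omega) (by omega)

lemma escape_exists (s : BS w) :
    ∃ p : List Bool, 1 ≤ p.length ∧ p.length ≤ 2 * w.length ∧ act (trans w hn) s p = none := by
  match s with
  | none => exact ⟨[false], by simp, by simp; omega, rfl⟩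
  | some (i, ok) =>
      refine ⟨List.replicate (w.length - (i:ℕ)) false ++ w, ?_, ?_, ?_⟩
      · simp; omega
      · have := i.2; simp; omega
      · rw [act_append]
        have hm : 0 < w.length - (i:ℕ) := by have := i.2; omega
        rcases act_block w hn (w.length - (i:ℕ)) hm i ok (by have := i.2; omega) with h | h
        · rw [h, act_trans_none]
        · rw [h]
          have := act_spell w hn w.length 0 hn (by omega)
          simpa using this

end BlockAutomaton

section Invariant

variable (w : List Bool) (hn : 0 < w.length)

lemma run_invariant (X : ℕ → Bool) (hX : ¬ Occurs w X) :
    ∀ t, run (trans w hn) (some (⟨0, hn⟩, true)) X t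
      = some (⟨t % w.length, Nat.mod_lt t hn⟩,
          decide (∀ k < t % w.length, X (t / w.length * w.length + k) = w.getD k false)) := by
  intro t
  induction t with
  | zero =>
      refine congrArg some (Prod.ext (Fin.ext (by simp)) ?_)
      show true = _
      simp
  | succ t ih =>
      set n := w.length with hnn
      set i := t % n with hi
      set j := t / n with hj
      have hiltn : i < n := Nat.mod_lt t hn
      have ht : j * n + i = t := by
        rw [mul_comm]
        exact Nat.div_add_mod t n
      show trans w hn (run (trans w hn) (some (⟨0, hn⟩, true)) X t) (X t) = _
      rw [ih]
      have hok' : ((decide (∀ k < i, X (j * n + k) = w.getD k false)) && (X t == w.getD i false))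
          = decide (∀ k < i + 1, X (j * n + k) = w.getD k false) := by
        rw [Bool.eq_iff_iff, Bool.and_eq_true, decide_eq_true_eq, decide_eq_true_eq, beq_iff_eq]
        constructor
        · rintro ⟨h1, h2⟩ k hk
          rcases Nat.lt_or_ge k i with hki | hki
          · exact h1 k hki
          · have hki' : k = i := by omega
            subst hki'
            rw [ht]; exact h2
        · intro h
          refine ⟨fun k hk => h k (by omega), ?_⟩
          rw [← ht]; exact h i (by omega)
      by_cases hi1 : i + 1 = n
      · -- end of block
        have hok'false : ((decide (∀ k < i, X (j * n + k) = w.getD k false))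
            && (X t == w.getD i false)) = false := by
          rw [hok']
          by_contra hcon
          rw [Bool.not_eq_false, decide_eq_true_eq] at hcon
          exact hX ⟨j * n, fun k hk => hcon k (by omega)⟩
        have htrans : trans w hn (some (⟨i, hiltn⟩, decide (∀ k < i, X (j * n + k) = w.getD k false))) (X t)
            = some (⟨0, hn⟩, true) := by
          show (if _h : i + 1 = n then _ else _) = _
          rw [dif_pos hi1, hok'false]
          rfl
        rw [htrans]
        have hmod : (t + 1) % n = 0 := by
          have : t + 1 = (j + 1) * n := by
            rw [add_mul, one_mul]; omega
          rw [this, Nat.mul_mod_left]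
        congr 1
        refine Prod.ext (by simp [← hnn, hmod]) ?_
        simp [← hnn, hmod]
      · -- middle of block
        have htrans : trans w hn (some (⟨i, hiltn⟩, decide (∀ k < i, X (j * n + k) = w.getD k false))) (X t)
            = some (⟨i + 1, by omega⟩,
                ((decide (∀ k < i, X (j * n + k) = w.getD k false)) && (X t == w.getD i false))) := by
          show (if _h : i + 1 = n then _ else _) = _
          rw [dif_neg hi1]
        rw [htrans, hok']
        have hstep : t + 1 = (i + 1) + j * n := by omega
        have hmod : (t + 1) % n = i + 1 := by
          rw [hstep, Nat.add_mul_mod_self_right, Nat.mod_eq_of_lt (by omega)]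
        have hdiv : (t + 1) / n = j := by
          rw [hstep, Nat.add_mul_div_right _ _ hn, Nat.div_eq_of_lt (by omega), Nat.zero_add]
        congr 1
        refine Prod.ext (by simp [← hnn, hmod]) ?_
        simp only [← hnn, hmod, hdiv]

end Invariant

lemma mu_zero_of_le_pow {E : Set (ℕ → Bool)} {c : ENNReal} (hc : c < 1) (h : ∀ k, mu E ≤ c ^ k) :
    mu E = 0 := by
  have ht := ENNReal.tendsto_pow_atTop_nhds_zero_of_lt_one hc
  have h0 : mu E ≤ 0 := ge_of_tendsto ht (Filter.Eventually.of_forall h)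
  exact le_zero_iff.mp h0

lemma c_lt_one (L : ℕ) : (1 : ENNReal) - 2⁻¹ ^ L < 1 := by
  refine ENNReal.sub_lt_self (by norm_num) (by norm_num) ?_
  exact pow_ne_zero _ (ENNReal.inv_ne_zero.mpr (by norm_num))

theorem left_direction (X : ℕ → Bool) (hnd : ¬ Disjunctive X) :
    ∃ (S : Type) (_ : Fintype S) (f : S → Bool → S) (s₀ : S) (F : Set S),
      mu {Y : ℕ → Bool | BuchiAccepts f s₀ F Y} = 0 ∧ BuchiAccepts f s₀ F X := by
  obtain ⟨w, hw⟩ := not_forall.mp hnd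
  have hn : 0 < w.length := by
    rcases w with _ | ⟨b, w'⟩
    · exact absurd ⟨0, by simp⟩ hw
    · simp
  refine ⟨BS w, inferInstance, trans w hn, some (⟨0, hn⟩, true), {s | s ≠ none}, ?_, ?_⟩
  · -- measure zero
    set s₀ : BS w := some (⟨0, hn⟩, true) with hs₀
    have hsub : {Y : ℕ → Bool | BuchiAccepts (trans w hn) s₀ {s | s ≠ none} Y}
        ⊆ {Y | ∀ t, run (trans w hn) s₀ Y t ≠ none} := by
      intro Y hY t hnone
      have hev : ∀ᶠ u in atTop, run (trans w hn) s₀ Y u = none := by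
        rw [eventually_atTop]
        exact ⟨t, fun u hu => by
          have := run_none_absorb w hn Y s₀ t hnone (u - t)
          rwa [show t + (u - t) = u by omega] at this⟩
      obtain ⟨u, hu1, hu2⟩ := (hY.and_eventually hev).exists
      exact hu1 hu2
    refine mu_zero_of_le_pow (c_lt_one (2 * w.length)) fun k => ?_
    calc mu {Y : ℕ → Bool | BuchiAccepts (trans w hn) s₀ {s | s ≠ none} Y}
        ≤ mu {Z | ∀ t, 1 ≤ t → t ≤ k * (2 * w.length) → run (trans w hn) s₀ Z t ≠ none} := by
          refine measure_mono (le_trans hsub ?_)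
          intro Y hY t _ _
          exact hY t
      _ ≤ (1 - 2⁻¹ ^ (2 * w.length)) ^ k := by
          refine mu_avoid_pow (trans w hn) none (D := Set.univ) (fun s _ b => trivial)
            (2 * w.length) (fun s _ => escape_exists w hn s) k s₀ trivial
  · -- X is accepted
    refine Filter.Frequently.of_forall fun t => ?_
    rw [run_invariant w hn X hw t]
    simp

lemma occurs_at_ge (X : ℕ → Bool) (hdisj : Disjunctive X) (v : List Bool) (m : ℕ) :
    ∃ p, m ≤ p ∧ ∀ k < v.length, X (p + k) = v.getD k false := by
  obtain ⟨p₀, hp₀⟩ := hdisj (List.replicate m false ++ v)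
  refine ⟨p₀ + m, by omega, fun k hk => ?_⟩
  have hlen : (List.replicate m false ++ v).length = m + v.length := by simp
  have h := hp₀ (m + k) (by rw [hlen]; omega)
  rw [List.getD_append_right _ _ _ _ (by simp)] at h
  simpa [show p₀ + (m + k) = p₀ + m + k by omega, show m + k - m = k by omega] using h

lemma run_D_mem {S : Type*} (f : S → Bool → S) {D : Set S} (hcl : ∀ s ∈ D, ∀ b, f s b ∈ D)
    {s : S} (hs : s ∈ D) (Z : ℕ → Bool) (t : ℕ) : run f s Z t ∈ D := by
  rw [run_eq_act]; exact act_mem_of_closed f hcl hs _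

lemma mu_tail_avoid_zero {S : Type} [Fintype S] (f : S → Bool → S) (s₀ : S) (q : S)
    {D : Set S} (hcl : ∀ s ∈ D, ∀ b, f s b ∈ D) (hqD : q ∈ D) (L : ℕ)
    (hesc : ∀ s ∈ D, ∃ p : List Bool, 1 ≤ p.length ∧ p.length ≤ L ∧ act f s p = q)
    (u : List Bool) (hu : act f s₀ u = q) (d : ℕ) :
    mu {Y | IsPrefixOfSeq u Y ∧ ∀ t, u.length + d ≤ t → run f s₀ Y t ≠ q} = 0 := by
  refine mu_zero_of_le_pow (c_lt_one L) fun k => ?_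
  set N := u.length with hN
  set T := N + d with hT
  set P : Finset (Fin T → Bool) :=
    Finset.univ.filter (fun v => ∀ j : Fin T, (j:ℕ) < N → v j = u.getD j false) with hP
  have hincl : {Y | IsPrefixOfSeq u Y ∧ ∀ t, N + d ≤ t → run f s₀ Y t ≠ q}
      ⊆ ⋃ v ∈ P, {Y | IsPrefixOfSeq (List.ofFn v) Y ∧
          (fun j => Y (j + (List.ofFn v).length)) ∈
            {W | ∀ t, 1 ≤ t → t ≤ k * L → run f (act f s₀ (List.ofFn v)) W t ≠ q}} := by
    rintro Y ⟨hpre, htail⟩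
    set v : Fin T → Bool := fun i => Y i with hv
    have hvP : v ∈ P := Finset.mem_filter.2 ⟨Finset.mem_univ _, fun j hj => hpre j hj⟩
    refine Set.mem_biUnion hvP ⟨?_, ?_⟩
    · intro i hi
      simp only [List.length_ofFn] at hi
      rw [List.getD_eq_getElem _ _ (by simpa using hi)]
      simp [hv]
    · intro t ht1 htk
      simp only [List.length_ofFn, Set.mem_setOf_eq]
      have hofv : act f s₀ (List.ofFn v) = run f s₀ Y T := by rw [run_eq_act]; rfl
      rw [hofv, ← run_add]
      exact htail (T + t) (by omega)
  have hmemD : ∀ v ∈ P, act f s₀ (List.ofFn v) ∈ D := by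
    intro v hvP
    have hvpre := (Finset.mem_filter.1 hvP).2
    have htake : (List.ofFn v).take N = u := by
      apply List.ext_getElem (by simp [hT, hN])
      intro i h1 h2
      rw [List.getElem_take, List.getElem_ofFn]
      have hvi := hvpre ⟨i, by omega⟩ (by simpa using h2)
      rw [hvi, List.getD_eq_getElem _ _ h2]
    have hsplit : List.ofFn v = u ++ (List.ofFn v).drop N := by
      conv_lhs => rw [← List.take_append_drop N (List.ofFn v)]
      rw [htake]
    rw [hsplit, act_append, hu]
    exact act_mem_of_closed f hcl hqD _
  have hcardN : P.card ≤ 2 ^ d := by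
    have h2d : (2:ℕ) ^ d = Fintype.card (Fin d → Bool) := by simp [Fintype.card_fun]
    rw [h2d, ← Finset.card_univ]
    refine Finset.card_le_card_of_injOn
      (fun v => fun j : Fin d => v ⟨N + (j:ℕ), by omega⟩)
      (fun _ _ => Finset.mem_univ _) ?_
    intro v hvP v' hv'P heq
    have hv1 := (Finset.mem_filter.1 hvP).2
    have hv2 := (Finset.mem_filter.1 hv'P).2
    funext i
    rcases Nat.lt_or_ge (i:ℕ) N with hi | hi
    · rw [hv1 i hi, hv2 i hi]
    · have hieq : i = ⟨N + ((i:ℕ) - N), by omega⟩ := Fin.ext (by simp; omega)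
      rw [hieq]
      exact congrFun heq ⟨(i:ℕ) - N, by omega⟩
  have hcard : (P.card : ENNReal) ≤ 2 ^ d := by
    calc (P.card : ENNReal) ≤ ((2^d : ℕ) : ENNReal) := by exact_mod_cast hcardN
      _ = 2 ^ d := by push_cast; rfl
  set c : ENNReal := 1 - 2⁻¹ ^ L with hc
  calc mu {Y | IsPrefixOfSeq u Y ∧ ∀ t, u.length + d ≤ t → run f s₀ Y t ≠ q}
      ≤ ∑ v ∈ P, mu {Y | IsPrefixOfSeq (List.ofFn v) Y ∧
          (fun j => Y (j + (List.ofFn v).length)) ∈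
            {W | ∀ t, 1 ≤ t → t ≤ k * L → run f (act f s₀ (List.ofFn v)) W t ≠ q}} :=
        le_trans (measure_mono hincl) (measure_biUnion_finset_le _ _)
    _ ≤ ∑ _v ∈ P, 2⁻¹ ^ T * c ^ k := by
        refine Finset.sum_le_sum fun v hv => ?_
        rw [mu_prefix_shift _ _ (measurableSet_avoid f _ q (k * L)), List.length_ofFn]
        exact mul_le_mul_right (mu_avoid_pow f q hcl L hesc k _ (hmemD v hv)) _
    _ = (P.card : ENNReal) * (2⁻¹ ^ T * c ^ k) := by rw [Finset.sum_const, nsmul_eq_mul]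
    _ ≤ 2 ^ d * (2⁻¹ ^ T * c ^ k) := mul_le_mul_left hcard _
    _ ≤ c ^ k := by
        have hTpow : (2:ENNReal)⁻¹ ^ T = 2⁻¹ ^ N * 2⁻¹ ^ d := by rw [hT, pow_add]
        rw [hTpow]
        have h1 : (2:ENNReal) ^ d * (2⁻¹ ^ N * 2⁻¹ ^ d * c ^ k)
            = (2 ^ d * 2⁻¹ ^ d) * (2⁻¹ ^ N * c ^ k) := by ring
        rw [h1, ← mul_pow, ENNReal.mul_inv_cancel (by norm_num) (by norm_num), one_pow, one_mul]
        calc 2⁻¹ ^ N * c ^ k ≤ 1 * c ^ k := by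
              refine mul_le_mul_left ?_ _
              exact pow_le_one' (ENNReal.inv_le_one.mpr one_le_two) N
          _ = c ^ k := one_mul _

theorem right_direction {S : Type} [Fintype S] (f : S → Bool → S) (s₀ : S) (F : Set S)
    (X : ℕ → Bool) (hdisj : Disjunctive X) (hacc : BuchiAccepts f s₀ F X) :
    mu {Y : ℕ → Bool | BuchiAccepts f s₀ F Y} ≠ 0 := by
  classical
  have hacc' : ∃ᶠ t in atTop, run f s₀ X t ∈ F := hacc
  -- a state q ∈ F visited infinitely often
  have hqex : ∃ q, q ∈ F ∧ (∃ᶠ t in atTop, run f s₀ X t = q) := by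
    by_contra hcon
    push_neg at hcon
    have hev : ∀ᶠ t in atTop, ∀ q : S, q ∈ F → run f s₀ X t ≠ q := by
      rw [eventually_all]
      intro q
      by_cases hqF : q ∈ F
      · have h1 : ∀ᶠ t in atTop, ¬ run f s₀ X t = q := hcon q hqF
        filter_upwards [h1] with t ht _
        exact ht
      · exact Filter.Eventually.of_forall fun t h => absurd h hqF
    obtain ⟨t, h1, h2⟩ := (hacc'.and_eventually hev).exists
    exact h2 _ h1 rfl
  obtain ⟨q, hqF, hqfreq⟩ := hqex
  set C : Set S := {s | ∃ᶠ t in atTop, run f s₀ X t = s} with hC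
  have hqC : q ∈ C := hqfreq
  -- run is eventually in C
  have hevC : ∀ᶠ t in atTop, run f s₀ X t ∈ C := by
    have hall : ∀ᶠ t in atTop, ∀ s : S, s ∉ C → run f s₀ X t ≠ s := by
      rw [eventually_all]
      intro s
      by_cases hs : s ∈ C
      · exact Filter.Eventually.of_forall fun t h => absurd hs h
      · have h1 : ∀ᶠ t in atTop, ¬ run f s₀ X t = s := not_frequently.1 hs
        filter_upwards [h1] with t ht _
        exact ht
    filter_upwards [hall] with t ht
    by_contra hnot
    exact ht _ hnot rfl
  obtain ⟨N₀, hN₀⟩ := eventually_atTop.1 hevC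
  -- for every word, some C-state is mapped into C by it
  have hkey : ∀ v : List Bool, ∃ s ∈ C, act f s v ∈ C := by
    intro v
    obtain ⟨p, hpN, hocc⟩ := occurs_at_ge X hdisj v N₀
    refine ⟨run f s₀ X p, hN₀ p hpN, ?_⟩
    have hpre' : pre (fun n => X (n + p)) v.length = v := by
      apply List.ext_getElem (by simp)
      intro i h1 h2
      have hx := hocc i (by simpa using h2)
      rw [List.getD_eq_getElem _ _ h2] at hx
      simp only [pre, List.getElem_ofFn]
      rw [← hx, add_comm]
    have hact : act f (run f s₀ X p) v = run f s₀ X (p + v.length) := by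
      conv_rhs => rw [run_add, run_eq_act]
      rw [hpre']
    rw [hact]
    exact hN₀ _ (by omega)
  -- mutual reachability inside C
  have hreach : ∀ s ∈ C, ∀ t ∈ C, Reach f s t := by
    intro s hs t ht
    obtain ⟨p, -, hp⟩ := frequently_atTop.1 hs 0
    obtain ⟨p', hp'ge, hp'⟩ := frequently_atTop.1 ht p
    refine ⟨pre (fun n => X (n + p)) (p' - p), ?_⟩
    have h : act f (run f s₀ X p) (pre (fun n => X (n + p)) (p' - p)) = run f s₀ X p' := by
      rw [← run_eq_act, ← run_add, show p + (p' - p) = p' by omega]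
    rw [← hp, h, hp']
  -- leaf property at q
  have hleaf : ∀ t, Reach f q t → Reach f t q := by
    by_contra hcon
    push_neg at hcon
    obtain ⟨t₀, hqt₀, ht₀q⟩ := hcon
    set G : Set S := {s | Reach f s q} with hG
    have hGclosed : ∀ s, s ∉ G → ∀ l, act f s l ∉ G := by
      intro s hs l hl
      obtain ⟨b, hb⟩ := hl
      exact hs ⟨l ++ b, by rw [act_append, hb]⟩
    have hescG : ∀ s ∈ G, ∃ l : List Bool, act f s l ∉ G := by
      intro s hs
      obtain ⟨a, ha⟩ := hs
      obtain ⟨b, hb⟩ := hqt₀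
      exact ⟨a ++ b, by rw [act_append, ha, hb]; exact ht₀q⟩
    have hkill : ∀ A : Finset S, ∃ l : List Bool, ∀ s ∈ A, act f s l ∉ G := by
      intro A
      induction A using Finset.induction_on with
      | empty => exact ⟨[], by simp⟩
      | @insert s A hsA ih =>
          obtain ⟨l, hl⟩ := ih
          by_cases hGm : act f s l ∈ G
          · obtain ⟨l', hl'⟩ := hescG _ hGm
            refine ⟨l ++ l', fun s' hs' => ?_⟩
            rw [act_append]
            rcases Finset.mem_insert.1 hs' with rfl | hmem
            · exact hl'
            · exact hGclosed _ (hl s' hmem) l'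
          · refine ⟨l, fun s' hs' => ?_⟩
            rcases Finset.mem_insert.1 hs' with rfl | hmem
            · exact hGm
            · exact hl s' hmem
    obtain ⟨l, hl⟩ := hkill (Finset.univ.filter (· ∈ C))
    obtain ⟨s, hsC, hsl⟩ := hkey l
    exact hl s (Finset.mem_filter.2 ⟨Finset.mem_univ _, hsC⟩) (hreach _ hsl _ hqC)
  -- the closed set D of states reachable from q
  set D : Set S := {t | Reach f q t} with hD
  have hqD : q ∈ D := ⟨[], rfl⟩
  have hDcl : ∀ s ∈ D, ∀ b, f s b ∈ D := by
    intro s hs b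
    obtain ⟨l, hl⟩ := hs
    exact ⟨l ++ [b], by rw [act_append, hl]; rfl⟩
  -- uniform escape length
  have hPex : ∀ s : S, ∃ p : List Bool, 1 ≤ p.length ∧ (s ∈ D → act f s p = q) := by
    intro s
    by_cases hs : s ∈ D
    · have hfD : f s false ∈ D := hDcl s hs false
      obtain ⟨v, hv⟩ := hleaf (f s false) hfD
      exact ⟨false :: v, by simp, fun _ => hv⟩
    · exact ⟨[false], by simp, fun h => absurd h hs⟩
  choose Pw hPw1 hPw2 using hPex
  set L := Finset.univ.sup (fun s : S => (Pw s).length) with hL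
  have hesc : ∀ s ∈ D, ∃ p : List Bool, 1 ≤ p.length ∧ p.length ≤ L ∧ act f s p = q := by
    intro s hs
    refine ⟨Pw s, hPw1 s, ?_, hPw2 s hs⟩
    rw [hL]
    exact Finset.le_sup (f := fun s : S => (Pw s).length) (Finset.mem_univ s)
  -- a word reaching q
  obtain ⟨N, -, hNq⟩ := frequently_atTop.1 hqC 0
  set u := pre X N with hudef
  have hu : act f s₀ u = q := by rw [← run_eq_act]; exact hNq
  -- contradiction
  intro hmu0
  have hdiff : mu ({Y | IsPrefixOfSeq u Y} \ {Y : ℕ → Bool | BuchiAccepts f s₀ F Y}) = 0 := by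
    have hsub : {Y | IsPrefixOfSeq u Y} \ {Y : ℕ → Bool | BuchiAccepts f s₀ F Y}
        ⊆ ⋃ d : ℕ, {Y | IsPrefixOfSeq u Y ∧ ∀ t, u.length + d ≤ t → run f s₀ Y t ≠ q} := by
      rintro Y ⟨hpre, hnacc⟩
      simp only [Set.mem_setOf_eq] at hnacc
      have hnacc' : ¬ ∃ᶠ t in atTop, run f s₀ Y t ∈ F := hnacc
      obtain ⟨T, hT⟩ := eventually_atTop.1 (not_frequently.1 hnacc')
      refine Set.mem_iUnion.2 ⟨T, hpre, fun t ht hrq => ?_⟩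
      exact hT t (by omega) (by rw [hrq]; exact hqF)
    refine measure_mono_null hsub (measure_iUnion_null fun d => ?_)
    exact mu_tail_avoid_zero f s₀ q hDcl hqD L hesc u hu d
  have hcap : mu ({Y | IsPrefixOfSeq u Y} ∩ {Y : ℕ → Bool | BuchiAccepts f s₀ F Y}) = 0 :=
    measure_mono_null Set.inter_subset_right hmu0
  have h1 := measure_le_inter_add_diff mu {Y | IsPrefixOfSeq u Y}
      {Y : ℕ → Bool | BuchiAccepts f s₀ F Y}
  rw [hcap, hdiff, add_zero, mu_prefix u] at h1
  exact pow_ne_zero _ (ENNReal.inv_ne_zero.2 (by norm_num)) (le_zero_iff.1 h1)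

end S8

/-- `X` is accepted by some deterministic Büchi automaton of measure zero
iff `X` is not disjunctive. -/
theorem stmt8 (X : ℕ → Bool) :
    (∃ (S : Type) (_ : Fintype S) (f : S → Bool → S) (s₀ : S) (F : Set S),
        mu {Y : ℕ → Bool | BuchiAccepts f s₀ F Y} = 0 ∧ BuchiAccepts f s₀ F X) ↔
      ¬ Disjunctive X := by
  constructor
  · rintro ⟨S, hS, f, s₀, F, hmu, hX⟩ hdisj
    exact @S8.right_direction S hS f s₀ F X hdisj hX hmu
  · exact S8.left_direction X
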